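/- Let a < b be real numbers. Let λ : ℝ → ℝ be continuously differentiable and strictly positive on [a,b], let λ_θ : ℝ → ℝ be twice continuously differentiable and strictly positive on [a,b], and let h : ℝ → ℝ be continuously differentiable on [a,b] with h(a) = 0 and h(b) = 0. Define q(t) = λ(t)·exp(−∫_a^t λ(s) ds), ψ(t) = λ'(t)/λ(t) − λ(t), and ψ_θ(t) = λ_θ'(t)/λ_θ(t) − λ_θ(t). Then (1/2)·∫_a^b q(t)·(ψ(t) − ψ_θ(t))²·h(t) dt = ∫_a^b q(t)·((1/2)·ψ_θ(t)²·h(t) + ψ_θ'(t)·h(t) + ψ_θ(t)·h'(t)) dt + (1/2)·∫_a^b q(t)·ψ(t)²·h(t) dt; in particular the explicit weighted objective equals the implicit weighted objective plus a term not depending on λ_θ, with no boundary terms. -/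

import Mathlib

open MeasureTheory Real Set intervalIntegral

lemma sm_key (a b : ℝ) (hab : a < b) (q ψ ψθ ψθd H H' : ℝ → ℝ)
    (hqc : ContinuousOn q (Set.Icc a b))
    (hψc : ContinuousOn ψ (Set.Icc a b))
    (hψθc : ContinuousOn ψθ (Set.Icc a b))
    (hψθdc : ContinuousOn ψθd (Set.Icc a b))
    (hHc : ContinuousOn H (Set.Icc a b))
    (hH'c : ContinuousOn H' (Set.Icc a b))
    (hderiv : ∀ t ∈ Set.Ioo a b, HasDerivAt (fun u => q u * (ψθ u * H u))
        (q t * ψ t * (ψθ t * H t) + q t * (ψθd t * H t + ψθ t * H' t)) t)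
    (hHa : H a = 0) (hHb : H b = 0) :
    (1/2) * ∫ t in a..b, q t * ((ψ t - ψθ t)^2 * H t)
    = (∫ t in a..b, q t * ((1/2) * ψθ t ^ 2 * H t + ψθd t * H t + ψθ t * H' t))
      + (1/2) * ∫ t in a..b, q t * (ψ t ^ 2 * H t) := by
  have hIcc : Set.uIcc a b = Set.Icc a b := Set.uIcc_of_le hab.le
  set G : ℝ → ℝ := fun t => q t * ψ t * (ψθ t * H t) + q t * (ψθd t * H t + ψθ t * H' t)
    with hGdef
  have hGc : ContinuousOn G (Set.Icc a b) := by
    apply ContinuousOn.add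
    · exact (hqc.mul hψc).mul (hψθc.mul hHc)
    · exact hqc.mul ((hψθdc.mul hHc).add (hψθc.mul hH'c))
  have hGint : IntervalIntegrable G volume a b := (hIcc ▸ hGc).intervalIntegrable
  have hFc : ContinuousOn (fun u => q u * (ψθ u * H u)) (Set.Icc a b) :=
    hqc.mul (hψθc.mul hHc)
  have hzero : (∫ t in a..b, G t) = 0 := by
    rw [intervalIntegral.integral_eq_sub_of_hasDerivAt_of_le hab.le hFc hderiv hGint]
    simp [hHa, hHb]
  have hg1 : IntervalIntegrable (fun t => q t * ((ψ t - ψθ t)^2 * H t)) volume a b := by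
    apply ContinuousOn.intervalIntegrable
    rw [hIcc]; exact hqc.mul ((((hψc.sub hψθc).pow 2)).mul hHc)
  have hg3 : IntervalIntegrable (fun t => q t * (ψ t ^ 2 * H t)) volume a b := by
    apply ContinuousOn.intervalIntegrable
    rw [hIcc]; exact hqc.mul (((hψc.pow 2)).mul hHc)
  have e2 : (∫ t in a..b, q t * ((1/2) * ψθ t ^ 2 * H t + ψθd t * H t + ψθ t * H' t))
      = ∫ t in a..b, ((1/2) * (q t * ((ψ t - ψθ t)^2 * H t))
          - (1/2) * (q t * (ψ t ^ 2 * H t)) + G t) := by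
    apply intervalIntegral.integral_congr
    intro t _
    simp only [hGdef]
    ring
  rw [e2, intervalIntegral.integral_add ((hg1.const_mul _).sub (hg3.const_mul _)) hGint,
    intervalIntegral.integral_sub (hg1.const_mul _) (hg3.const_mul _),
    intervalIntegral.integral_const_mul, intervalIntegral.integral_const_mul, hzero]
  ring


/-- Single-conditional equivalence between explicit and implicit weighted
(autoregressive) score matching.  With a weight `h` vanishing at both endpoints,
`(1/2)∫ q (ψ - ψθ)² h = ∫ q ((1/2)ψθ² h + ψθ' h + ψθ h') + (1/2)∫ q ψ² h`,
with no boundary terms; here `q t = lam t * exp (-∫_a^t lam)`,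
`ψ t = lam' t / lam t - lam t`, `ψθ t = lamθ' t / lamθ t - lamθ t` and
`ψθ' t = lamθ'' t / lamθ t - (lamθ' t / lamθ t)^2 - lamθ' t`. -/
theorem stmt_4 (a b : ℝ) (hab : a < b)
    (lam lam' lamθ lamθ' lamθ'' h h' : ℝ → ℝ)
    (hlam : ∀ t ∈ Set.Icc a b, HasDerivAt lam (lam' t) t)
    (hlam'c : ContinuousOn lam' (Set.Icc a b))
    (hlampos : ∀ t ∈ Set.Icc a b, 0 < lam t)
    (hlamθ : ∀ t ∈ Set.Icc a b, HasDerivAt lamθ (lamθ' t) t)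
    (hlamθ' : ∀ t ∈ Set.Icc a b, HasDerivAt lamθ' (lamθ'' t) t)
    (hlamθ''c : ContinuousOn lamθ'' (Set.Icc a b))
    (hlamθpos : ∀ t ∈ Set.Icc a b, 0 < lamθ t)
    (hh : ∀ t ∈ Set.Icc a b, HasDerivAt h (h' t) t)
    (hh'c : ContinuousOn h' (Set.Icc a b))
    (hha : h a = 0) (hhb : h b = 0) :
    (1/2) * ∫ t in a..b,
        (lam t * Real.exp (-(∫ s in a..t, lam s))) *
          (((lam' t / lam t - lam t) - (lamθ' t / lamθ t - lamθ t))^2 * h t)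
    = (∫ t in a..b,
        (lam t * Real.exp (-(∫ s in a..t, lam s))) *
          ((1/2) * (lamθ' t / lamθ t - lamθ t)^2 * h t
            + (lamθ'' t / lamθ t - (lamθ' t / lamθ t)^2 - lamθ' t) * h t
            + (lamθ' t / lamθ t - lamθ t) * h' t))
      + (1/2) * (∫ t in a..b,
          (lam t * Real.exp (-(∫ s in a..t, lam s))) * ((lam' t / lam t - lam t)^2 * h t)) := by
  have hIcc : Set.uIcc a b = Set.Icc a b := Set.uIcc_of_le hab.le
  have hlamne : ∀ t ∈ Set.Icc a b, lam t ≠ 0 := fun t ht => (hlampos t ht).ne'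
  have hlamθne : ∀ t ∈ Set.Icc a b, lamθ t ≠ 0 := fun t ht => (hlamθpos t ht).ne'
  have hlamc : ContinuousOn lam (Set.Icc a b) :=
    fun t ht => (hlam t ht).continuousAt.continuousWithinAt
  have hlamθc : ContinuousOn lamθ (Set.Icc a b) :=
    fun t ht => (hlamθ t ht).continuousAt.continuousWithinAt
  have hlamθ'c : ContinuousOn lamθ' (Set.Icc a b) :=
    fun t ht => (hlamθ' t ht).continuousAt.continuousWithinAt
  have hhc : ContinuousOn h (Set.Icc a b) :=
    fun t ht => (hh t ht).continuousAt.continuousWithinAt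
  have hΛc : ContinuousOn (fun u => ∫ s in a..u, lam s) (Set.Icc a b) := by
    rw [← hIcc]
    exact intervalIntegral.continuousOn_primitive_interval (hIcc ▸ hlamc.integrableOn_compact isCompact_Icc)
  have hqc : ContinuousOn (fun t => lam t * Real.exp (-(∫ s in a..t, lam s))) (Set.Icc a b) :=
    hlamc.mul (Real.continuous_exp.comp_continuousOn hΛc.neg)
  have hψc : ContinuousOn (fun t => lam' t / lam t - lam t) (Set.Icc a b) :=
    (hlam'c.div hlamc hlamne).sub hlamc
  have hψθc : ContinuousOn (fun t => lamθ' t / lamθ t - lamθ t) (Set.Icc a b) :=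
    (hlamθ'c.div hlamθc hlamθne).sub hlamθc
  have hψθdc : ContinuousOn
      (fun t => lamθ'' t / lamθ t - (lamθ' t / lamθ t)^2 - lamθ' t) (Set.Icc a b) :=
    ((hlamθ''c.div hlamθc hlamθne).sub ((hlamθ'c.div hlamθc hlamθne).pow 2)).sub hlamθ'c
  have hderiv : ∀ t ∈ Set.Ioo a b, HasDerivAt
      (fun u => (lam u * Real.exp (-(∫ s in a..u, lam s))) *
        ((lamθ' u / lamθ u - lamθ u) * h u))
      ((lam t * Real.exp (-(∫ s in a..t, lam s))) * (lam' t / lam t - lam t) *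
          ((lamθ' t / lamθ t - lamθ t) * h t)
        + (lam t * Real.exp (-(∫ s in a..t, lam s))) *
          ((lamθ'' t / lamθ t - (lamθ' t / lamθ t)^2 - lamθ' t) * h t
            + (lamθ' t / lamθ t - lamθ t) * h' t)) t := by
    intro t ht
    have ht' : t ∈ Set.Icc a b := Set.Ioo_subset_Icc_self ht
    have hlamIoo : ContinuousOn lam (Set.Ioo a b) :=
      fun s hs => (hlam s (Set.Ioo_subset_Icc_self hs)).continuousAt.continuousWithinAt
    have hint : IntervalIntegrable lam volume a t := by
      apply ContinuousOn.intervalIntegrable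
      exact hlamc.mono (by rw [Set.uIcc_of_le ht'.1]; exact Set.Icc_subset_Icc le_rfl ht'.2)
    have hΛd : HasDerivAt (fun u => ∫ s in a..u, lam s) (lam t) t :=
      intervalIntegral.integral_hasDerivAt_right hint
        (hlamIoo.stronglyMeasurableAtFilter isOpen_Ioo t ht)
        (hlam t ht').continuousAt
    have hE : HasDerivAt (fun u => Real.exp (-(∫ s in a..u, lam s)))
        (Real.exp (-(∫ s in a..t, lam s)) * (-(lam t))) t := hΛd.neg.exp
    have hQd : HasDerivAt (fun u => lam u * Real.exp (-(∫ s in a..u, lam s)))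
        (lam' t * Real.exp (-(∫ s in a..t, lam s))
          + lam t * (Real.exp (-(∫ s in a..t, lam s)) * (-(lam t)))) t :=
      (hlam t ht').mul hE
    have hΨθd : HasDerivAt (fun u => lamθ' u / lamθ u - lamθ u)
        ((lamθ'' t * lamθ t - lamθ' t * lamθ' t) / (lamθ t)^2 - lamθ' t) t :=
      ((hlamθ' t ht').div (hlamθ t ht') (hlamθne t ht')).sub (hlamθ t ht')
    have hF := hQd.mul (hΨθd.mul (hh t ht'))
    refine hF.congr_deriv ?_
    simp only [Pi.mul_apply]
    have h1 : lam t ≠ 0 := hlamne t ht'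
    have h2 : lamθ t ≠ 0 := hlamθne t ht'
    field_simp
    ring
  exact sm_key a b hab _ _ _ _ h h' hqc hψc hψθc hψθdc hhc hh'c hderiv hha hhb
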